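/- Let 1 < p < 2 and μ > 1 be real numbers, and let β̃ satisfy max{ (p − μ(2−p))/2 , 0 } < β̃ < (p−1)·μ^{(p−2)/(2(p−1))}. Then there is no real number τ ∈ (0, 1) satisfying simultaneously p·τ^{2p−2} − 2β̃·τ^p = μ(2−p) and μ + β̃·τ^p − β̃·τ^{p−2} − τ^{2p−2} = 0. -/

import Mathlib

open Real Set

-- Bernoulli consequence: for s ∈ (0,1), 1<p<2:  (2-p)*s^(p-1) + (p-1)*s^(p-2) > 1
lemma bern (p s : ℝ) (hp1 : 1 < p) (hp2 : p < 2) (hs0 : 0 < s) (hs1 : s < 1) :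
    1 < (2 - p) * s ^ (p - 1) + (p - 1) * s ^ (p - 2) := by
  have h : s ^ (2 - p) < 1 + (2 - p) * (s - 1) := by
    have := rpow_one_add_lt_one_add_mul_self (s := s - 1) (by linarith) (by intro h; linarith [sub_eq_zero.mp h]) (p := 2 - p) (by linarith) (by linarith)
    simpa using this
  -- multiply stuff
  have hsp : (0:ℝ) < s ^ (2 - p) := rpow_pos_of_pos hs0 _
  have h1 : s ^ (p - 1) * s ^ (2 - p) = s := by
    rw [← rpow_add hs0]; norm_num
  have h2 : s ^ (p - 2) * s ^ (2 - p) = 1 := by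
    rw [← rpow_add hs0]; norm_num [rpow_zero]
  -- goal * s^(2-p):  (2-p)*s + (p-1) > s^(2-p)
  have key : s ^ (2 - p) < (2 - p) * s + (p - 1) := by nlinarith
  have := mul_lt_mul_of_pos_right (show s ^ (2 - p) < (2 - p) * s + (p - 1) from key) (rpow_pos_of_pos hs0 (p - 2))
  nlinarith [rpow_pos_of_pos hs0 (p-2), rpow_pos_of_pos hs0 (p-1), mul_pos (rpow_pos_of_pos hs0 (p-2)) hsp]

lemma Fpos (p s : ℝ) (hp1 : 1 < p) (hp2 : p < 2) (hs0 : 0 < s) (hs1 : s < 1) :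
    p * s ^ (p - 1) + (2 - p) * s ^ p < p * s + (2 - p) := by
  set F : ℝ → ℝ := fun x => p * x + (2 - p) - (2 - p) * x ^ p - p * x ^ (p - 1) with hF
  have hanti : StrictAntiOn F (Ioc 0 1) := by
    apply strictAntiOn_of_deriv_neg (convex_Ioc 0 1)
    · apply ContinuousOn.sub
      apply ContinuousOn.sub
      · fun_prop
      · exact (continuousOn_const.mul (continuousOn_id.rpow_const (fun x _ => Or.inr (by linarith))))
      · exact (continuousOn_const.mul (continuousOn_id.rpow_const (fun x _ => Or.inr (by linarith))))
    · intro x hx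
      rw [interior_Ioc] at hx
      obtain ⟨hx0, hx1⟩ := hx
      have hd : HasDerivAt F (p - (2 - p) * (p * x ^ (p - 1)) - p * ((p - 1) * x ^ (p - 2))) x := by
        have h1 : HasDerivAt (fun y : ℝ => y ^ p) (p * x ^ (p - 1)) x :=
          Real.hasDerivAt_rpow_const (Or.inl (ne_of_gt hx0))
        have h2 : HasDerivAt (fun y : ℝ => y ^ (p - 1)) ((p - 1) * x ^ (p - 1 - 1)) x :=
          Real.hasDerivAt_rpow_const (Or.inl (ne_of_gt hx0))
        have h2' : HasDerivAt (fun y : ℝ => y ^ (p - 1)) ((p - 1) * x ^ (p - 2)) x := by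
          convert h2 using 2; ring_nf
        have hd' := ((((hasDerivAt_id x).const_mul p).add_const (2 - p)).sub
          (h1.const_mul (2 - p))).sub (h2'.const_mul p)
        exact hd'.congr_deriv (by ring)
      rw [hd.deriv]
      have := bern p x hp1 hp2 hx0 hx1
      nlinarith [hp1]
  have h1 : F 1 < F s := hanti ⟨hs0, le_of_lt hs1⟩ ⟨zero_lt_one, le_refl 1⟩ hs1
  have hF1 : F 1 = 0 := by simp [hF]
  rw [hF1] at h1
  simp only [hF] at h1
  linarith


/-- Case (B6): for `1 < p < 2`, `μ > 1` and
`max{(p - μ(2-p))/2, 0} < β̃ < (p-1)μ^{(p-2)/(2(p-1))}`,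
the system `p·τ^{2p-2} - 2β̃·τ^p = μ(2-p)`, `μ + β̃·τ^p - β̃·τ^{p-2} - τ^{2p-2} = 0`
has no solution `τ ∈ (0, 1)`. -/
theorem no_solution_B6 (p μ β : ℝ) (hp1 : 1 < p) (hp2 : p < 2) (hμ : 1 < μ)
    (hβ1 : max ((p - μ * (2 - p)) / 2) 0 < β)
    (hβ2 : β < (p - 1) * μ ^ ((p - 2) / (2 * (p - 1)))) :
    ¬ ∃ τ : ℝ, 0 < τ ∧ τ < 1 ∧
      p * τ ^ (2 * p - 2) - 2 * β * τ ^ p = μ * (2 - p) ∧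
      μ + β * τ ^ p - β * τ ^ (p - 2) - τ ^ (2 * p - 2) = 0 := by
  rintro ⟨τ, hτ0, hτ1, h1, h2⟩
  set X := τ ^ p with hX
  set Y := τ ^ (p - 2) with hY
  set Z := τ ^ (2 * p - 2) with hZ
  have hXpos : 0 < X := rpow_pos_of_pos hτ0 _
  have hYpos : 0 < Y := rpow_pos_of_pos hτ0 _
  have hZpos : 0 < Z := rpow_pos_of_pos hτ0 _
  have E : μ * (p * X + (2 - p) * Y) = Z * ((2 - p) * X + p * Y) := by
    linear_combination 2 * X * h2 + (X - Y) * h1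
  have hs0 : 0 < τ ^ (2:ℝ) := rpow_pos_of_pos hτ0 _
  have hs1 : τ ^ (2:ℝ) < 1 := rpow_lt_one hτ0.le hτ1 (by norm_num)
  have hkey := Fpos p (τ ^ (2:ℝ)) hp1 hp2 hs0 hs1
  rw [← rpow_mul hτ0.le, ← rpow_mul hτ0.le] at hkey
  have r1 : τ ^ (2 * (p - 1)) * Y = Z * Y := by
    rw [hZ]; congr 2; ring
  have r2 : τ ^ (2 * p) * Y = Z * X := by
    rw [hY, hZ, hX, ← rpow_add hτ0, ← rpow_add hτ0]; congr 1; ring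
  have r3 : τ ^ (2:ℝ) * Y = X := by
    rw [hY, hX, ← rpow_add hτ0]; congr 1; ring
  have hm := mul_lt_mul_of_pos_right hkey hYpos
  have h5 : Z * ((2 - p) * X + p * Y) < p * X + (2 - p) * Y := by nlinarith [hm, r1, r2, r3]
  have hA : 0 < p * X + (2 - p) * Y := by nlinarith
  nlinarith [mul_pos (sub_pos.mpr hμ) hA]
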